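/- Let X be a finite non-empty set with an imprecise probability tree and associated game-theoretic upper expectation Ē_V. For any bounded-below f : Ω → ℝ̄, the process P defined by P(s) := Ē_V(f|s) for all s ∈ X* is a supermartingale. -/
import Mathlib


open Filter Topology

/-- A function to the extended reals is bounded below by some real number. -/
def BddBelowF {Y : Type*} (f : Y → EReal) : Prop :=
  ∃ M : ℝ, ∀ y, (M : EReal) ≤ f y

/-- An upper expectation on the bounded-below extended-real functions on `Y`:
axioms E1 (constants), E2 (subadditivity), E3 (positive/`+∞` homogeneity on
non-negative functions) and E4 (monotonicity). -/
structure IsUpperExpectation {Y : Type*} (E : (Y → EReal) → EReal) : Prop where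
  const : ∀ c : ℝ, E (fun _ => (c : EReal)) = (c : EReal)
  subadd : ∀ f g : Y → EReal, BddBelowF f → BddBelowF g →
    E (fun y => f y + g y) ≤ E f + E g
  homog : ∀ lam : EReal, 0 < lam → ∀ f : Y → EReal, BddBelowF f → (∀ y, 0 ≤ f y) →
    E (fun y => lam * f y) = lam * E f
  mono : ∀ f g : Y → EReal, BddBelowF f → BddBelowF g → (∀ y, f y ≤ g y) → E f ≤ E g

/-- The initial segment `ω^n = (ω_1, …, ω_n)` of a path `ω ∈ X^ℕ`. -/
def seg {X : Type*} (ω : ℕ → X) (n : ℕ) : List X :=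
  List.ofFn (fun i : Fin n => ω i)

/-- The cylinder event `Γ(s)` of all paths going through the situation `s`. -/
def cyl {X : Type*} (s : List X) : Set (ℕ → X) :=
  {ω | seg ω s.length = s}

/-- A global variable is `n`-measurable if it only depends on the first `n` states. -/
def NMeas {X α : Type*} (n : ℕ) (f : (ℕ → X) → α) : Prop :=
  ∀ ω ω' : ℕ → X, seg ω n = seg ω' n → f ω = f ω'

/-- A supermartingale for an imprecise probability tree `Q`: a bounded-below
extended-real process `M` on situations such that `Q_s(M(s·)) ≤ M(s)` everywhere. -/
def IsSupermartingale {X : Type*} (Q : List X → (X → EReal) → EReal)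
    (M : List X → EReal) : Prop :=
  (∃ B : ℝ, ∀ s, (B : EReal) ≤ M s) ∧ ∀ s, Q s (fun x => M (s ++ [x])) ≤ M s

/-- The game-theoretic upper expectation `Ē_V(f | s)`. -/
noncomputable def gUE {X : Type*} (Q : List X → (X → EReal) → EReal)
    (f : (ℕ → X) → EReal) (s : List X) : EReal :=
  sInf { y | ∃ M : List X → EReal, IsSupermartingale Q M ∧
    (∀ ω ∈ cyl s, f ω ≤ Filter.liminf (fun n => M (seg ω n)) Filter.atTop) ∧ M s = y }

lemma seg_length {X : Type*} (ω : ℕ → X) (n : ℕ) : (seg ω n).length = n := by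
  simp [seg]

lemma seg_getElem {X : Type*} (ω : ℕ → X) (n i : ℕ) (h : i < (seg ω n).length) :
    (seg ω n)[i] = ω i := by
  simp [seg]

lemma seg_prefix {X : Type*} (ω : ℕ → X) {n m : ℕ} (h : n ≤ m) :
    seg ω n <+: seg ω m := by
  rw [List.prefix_iff_eq_take]
  apply List.ext_getElem
  · simp [seg]; omega
  · intro i h1 h2
    simp only [List.getElem_take]
    rw [seg_getElem, seg_getElem]

lemma step_lemma {X : Type*} [Fintype X] [Nonempty X]
    {Q : List X → (X → EReal) → EReal} (hQ : ∀ s, IsUpperExpectation (Q s))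
    {M : List X → EReal} (hM : IsSupermartingale Q M) (t : List X) :
    ∃ x : X, M (t ++ [x]) ≤ M t := by
  by_contra h
  push_neg at h
  obtain ⟨B, hB⟩ := hM.1
  have hmin : M t < Finset.univ.inf' Finset.univ_nonempty (fun x => M (t ++ [x])) :=
    (Finset.lt_inf'_iff _).2 fun x _ => h x
  obtain ⟨z, hz1, hz2⟩ := exists_between hmin
  have hzt : z ≠ ⊤ := (hz2.trans_le le_top).ne
  have hzb : z ≠ ⊥ := fun hzb => by
    have := (hB t).trans_lt hz1
    simp [hzb] at this
  set r : ℝ := z.toReal with hr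
  have hzr : (r : EReal) = z := EReal.coe_toReal hzt hzb
  have hle : (r : EReal) ≤ M t := by
    calc (r : EReal) = Q t (fun _ => (r : EReal)) := ((hQ t).const r).symm
    _ ≤ Q t (fun x => M (t ++ [x])) := by
        apply (hQ t).mono _ _ ⟨r, fun _ => le_refl _⟩ ⟨B, fun x => hB _⟩
        intro x
        rw [hzr]
        exact hz2.le.trans (Finset.inf'_le _ (Finset.mem_univ x))
    _ ≤ M t := hM.2 t
  rw [hzr] at hle
  exact absurd hle (not_le.2 hz1)

lemma exists_path {X : Type*} [Fintype X] [Nonempty X]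
    {Q : List X → (X → EReal) → EReal} (hQ : ∀ s, IsUpperExpectation (Q s))
    {M : List X → EReal} (hM : IsSupermartingale Q M) (s : List X) :
    ∃ ω : ℕ → X, ω ∈ cyl s ∧
      Filter.liminf (fun n => M (seg ω n)) Filter.atTop ≤ M s := by
  choose pick hpick using fun t => step_lemma hQ hM t
  let g : ℕ → List X := fun n => Nat.rec s (fun _ t => t ++ [pick t]) n
  have hg0 : g 0 = s := rfl
  have hgsucc : ∀ n, g (n + 1) = g n ++ [pick (g n)] := fun n => rfl
  have hglen : ∀ n, (g n).length = s.length + n := by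
    intro n
    induction n with
    | zero => simp [hg0]
    | succ n ih => rw [hgsucc]; simp [ih]; omega
  have hgM : ∀ n, M (g n) ≤ M s := by
    intro n
    induction n with
    | zero => rw [hg0]
    | succ n ih => rw [hgsucc]; exact (hpick (g n)).trans ih
  have hpref : ∀ {n m : ℕ}, n ≤ m → g n <+: g m := by
    intro n m h
    induction m with
    | zero =>
      have : n = 0 := by omega
      subst this; exact List.prefix_refl _
    | succ m ih =>
      rcases Nat.lt_or_ge n (m + 1) with h' | h'
      · exact (ih (by omega)).trans ⟨[pick (g m)], (hgsucc m).symm⟩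
      · have : n = m + 1 := by omega
        subst this; exact List.prefix_refl _
  -- fix base case
  have hω_def : ∀ i : ℕ, i < (g (i + 1)).length := by
    intro i; have := hglen (i+1); omega
  let ω : ℕ → X := fun i => (g (i + 1))[i]'(hω_def i)
  have hωg : ∀ n i (hi : i < (g n).length), ω i = (g n)[i] := by
    intro n i hi
    rcases le_or_gt n (i + 1) with h | h
    · exact ((hpref h).getElem hi).symm
    · exact (hpref h.le).getElem (hω_def i)
  have hseg : ∀ n, seg ω (s.length + n) = g n := by
    intro n
    apply List.ext_getElem
    · rw [seg_length, hglen]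
    · intro i h1 h2
      rw [seg_getElem, hωg n i h2]
  refine ⟨ω, ?_, ?_⟩
  · show seg ω s.length = s
    have := hseg 0
    simpa [hg0] using this
  · apply Filter.liminf_le_of_frequently_le'
    apply Filter.Eventually.frequently
    filter_upwards [Filter.eventually_ge_atTop s.length] with n hn
    have : seg ω n = g (n - s.length) := by
      have := hseg (n - s.length)
      rwa [show s.length + (n - s.length) = n by omega] at this
    rw [this]
    exact hgM _

lemma gUE_lower {X : Type*} [Fintype X] [Nonempty X]
    {Q : List X → (X → EReal) → EReal} (hQ : ∀ s, IsUpperExpectation (Q s))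
    {f : (ℕ → X) → EReal} {B : ℝ} (hB : ∀ ω, (B : EReal) ≤ f ω) (s : List X) :
    (B : EReal) ≤ gUE Q f s := by
  apply le_sInf
  rintro y ⟨M, hM, hlim, rfl⟩
  obtain ⟨ω, hω, hlim'⟩ := exists_path hQ hM s
  exact (hB ω).trans ((hlim ω hω).trans hlim')

/-- Corollary 3: for bounded-below `f`, the process `s ↦ Ē_V(f | s)` is a
supermartingale. -/
theorem stmt14 {X : Type*} [Fintype X] [Nonempty X]
    (Q : List X → (X → EReal) → EReal) (hQ : ∀ s, IsUpperExpectation (Q s))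
    (f : (ℕ → X) → EReal) (hb : BddBelowF f) :
    IsSupermartingale Q (fun s => gUE Q f s) := by
  obtain ⟨B, hB⟩ := hb
  constructor
  · exact ⟨B, fun s => gUE_lower hQ hB s⟩
  · intro s
    apply le_sInf
    rintro y ⟨M, hM, hlim, rfl⟩
    obtain ⟨B', hB'⟩ := hM.1
    calc Q s (fun x => gUE Q f (s ++ [x])) ≤ Q s (fun x => M (s ++ [x])) := by
          apply (hQ s).mono _ _ ⟨B, fun x => gUE_lower hQ hB _⟩ ⟨B', fun x => hB' _⟩
          intro x
          apply sInf_le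
          refine ⟨M, hM, ?_, rfl⟩
          intro ω hω
          apply hlim ω
          show seg ω s.length = s
          have hω' : seg ω (s ++ [x]).length = s ++ [x] := hω
          have hpre := seg_prefix ω (show s.length ≤ (s ++ [x]).length by simp)
          rw [hω', List.prefix_iff_eq_take] at hpre
      -- finish
          rw [hpre, seg_length]
          simp
    _ ≤ M s := hM.2 s
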